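/- arXiv:1809.02783 — 2 statements merged into one kernel-verified Lean document; each statement's English description precedes it below -/
import Mathlib

section
/- Let f : S^{n-1} × ℝ → ℝ (n ≥ 2) be a continuous function satisfying f(u, p + u·m) = f(u, p) for all u ∈ S^{n-1}, p ∈ ℝ, and m ∈ ℤ^n. Then f(u, p + u·x) = f(u, p) for all x ∈ ℝ^n, i.e., f is independent of the second variable: f(u, p) = f(u, 0) for all p. -/
/-- The set of sphere points having two coordinates with irrational ratio is dense. -/
lemma good_dense (n : ℕ) (hn : 2 ≤ n) :
    Dense {u : {v : Fin n → ℝ // ∑ i, (v i) ^ 2 = 1} |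
      ∃ i j : Fin n, u.1 j ≠ 0 ∧ Irrational (u.1 i / u.1 j)} := by
  rw [Metric.dense_iff]
  intro u ε hε
  -- find a nonzero coordinate
  have h1 : (1 : ℝ) ≠ 0 := one_ne_zero
  obtain ⟨j, hj⟩ : ∃ j, u.1 j ≠ 0 := by
    by_contra h
    push_neg at h
    have : ∑ i, (u.1 i) ^ 2 = 0 := Finset.sum_eq_zero (fun k _ => by rw [h k]; ring)
    rw [u.2] at this; exact h1 this
  -- a second index
  set i : Fin n := if j.1 = 0 then ⟨1, by omega⟩ else ⟨0, by omega⟩ with hi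
  have hij : i ≠ j := by
    rcases eq_or_ne j.1 0 with h0 | h0 <;> simp [hi, h0] <;> intro hc <;>
      [exact absurd (congrArg Fin.val hc).symm (by simp [h0]);
       exact h0 ((congrArg Fin.val hc).symm)]
  set r2 : ℝ := u.1 i ^ 2 + u.1 j ^ 2 with hr2def
  have hj2 : 0 < u.1 j ^ 2 := by positivity
  have hr2 : 0 < r2 := by positivity
  have hlt : u.1 i ^ 2 < r2 := by simp [hr2def]; linarith
  set s : ℝ := u.1 j / |u.1 j| with hsdef
  have habs : |u.1 j| ≠ 0 := abs_ne_zero.mpr hj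
  have hs0 : s ≠ 0 := div_ne_zero hj habs
  have hs2 : s ^ 2 = 1 := by
    rw [hsdef, div_pow, sq_abs, div_self (pow_ne_zero 2 hj)]
  set V : ℝ → (Fin n → ℝ) := fun t =>
    Function.update (Function.update u.1 i t) j (s * Real.sqrt (r2 - t ^ 2)) with hV
  have hVi : ∀ t, V t i = t := by
    intro t
    simp only [hV, Function.update_of_ne hij, Function.update_self]
  have hVj : ∀ t, V t j = s * Real.sqrt (r2 - t ^ 2) := by
    intro t; simp only [hV, Function.update_self]
  have hVk : ∀ t k, k ≠ i → k ≠ j → V t k = u.1 k := by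
    intro t k hki hkj
    simp only [hV, Function.update_of_ne hkj, Function.update_of_ne hki]
  have hVu : V (u.1 i) = u.1 := by
    funext k
    rcases eq_or_ne k j with rfl | hkj
    · rw [hVj]
      have : r2 - u.1 i ^ 2 = u.1 k ^ 2 := by rw [hr2def]; ring
      rw [this, Real.sqrt_sq_eq_abs, hsdef, div_mul_cancel₀ _ habs]
    rcases eq_or_ne k i with rfl | hki
    · exact hVi _
    · exact hVk _ _ hki hkj
  have hVcont : Continuous V := by
    apply Continuous.update
    · exact (continuous_const.update i continuous_id)
    · exact continuous_const.mul ((continuous_const.sub (continuous_pow 2)).sqrt)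
  -- continuity: choose δ
  have hca : ContinuousAt V (u.1 i) := hVcont.continuousAt
  rw [Metric.continuousAt_iff] at hca
  obtain ⟨δ, hδ, hδε⟩ := hca ε hε
  have hsq : |u.1 i| < Real.sqrt r2 := by
    rw [show |u.1 i| = Real.sqrt (u.1 i ^ 2) by rw [Real.sqrt_sq_eq_abs]]
    exact Real.sqrt_lt_sqrt (sq_nonneg _) hlt
  set δ' : ℝ := min δ (Real.sqrt r2 - |u.1 i|) with hδ'def
  have hδ' : 0 < δ' := lt_min hδ (by linarith)
  set I : Set ℝ := Metric.ball (u.1 i) δ' with hIdef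
  have hIsub : ∀ t ∈ I, t ^ 2 < r2 := by
    intro t ht
    rw [hIdef, Metric.mem_ball, Real.dist_eq] at ht
    have h1 : |t| < Real.sqrt r2 := by
      calc |t| ≤ |t - u.1 i| + |u.1 i| := by
              have := abs_add_le (t - u.1 i) (u.1 i); simpa using this
        _ < δ' + |u.1 i| := by linarith
        _ ≤ Real.sqrt r2 := by
              have : δ' ≤ Real.sqrt r2 - |u.1 i| := min_le_right _ _
              linarith
    calc t ^ 2 = |t| ^ 2 := (sq_abs t).symm
      _ < Real.sqrt r2 ^ 2 := by
            apply pow_lt_pow_left₀ h1 (abs_nonneg t) (by norm_num)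
      _ = r2 := Real.sq_sqrt hr2.le
  set ρ : ℝ → ℝ := fun t => t / (s * Real.sqrt (r2 - t ^ 2)) with hρ
  -- injectivity on I
  have hinj : ∀ t1 ∈ I, ∀ t2 ∈ I, ρ t1 = ρ t2 → t1 = t2 := by
    intro t1 ht1 t2 ht2 heq
    have hA1 : 0 < Real.sqrt (r2 - t1 ^ 2) := Real.sqrt_pos.mpr (by linarith [hIsub t1 ht1])
    have hA2 : 0 < Real.sqrt (r2 - t2 ^ 2) := Real.sqrt_pos.mpr (by linarith [hIsub t2 ht2])
    set A1 := Real.sqrt (r2 - t1 ^ 2)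
    set A2 := Real.sqrt (r2 - t2 ^ 2)
    have hA1sq : A1 ^ 2 = r2 - t1 ^ 2 := Real.sq_sqrt (by linarith [hIsub t1 ht1])
    have hA2sq : A2 ^ 2 = r2 - t2 ^ 2 := Real.sq_sqrt (by linarith [hIsub t2 ht2])
    rw [hρ] at heq
    simp only at heq
    have hd1 : s * A1 ≠ 0 := mul_ne_zero hs0 hA1.ne'
    have hd2 : s * A2 ≠ 0 := mul_ne_zero hs0 hA2.ne'
    rw [div_eq_div_iff hd1 hd2] at heq
    -- t1 * (s * A2) = t2 * (s * A1)
    have hcr : t1 * A2 = t2 * A1 := by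
      have : s * (t1 * A2) = s * (t2 * A1) := by ring_nf; ring_nf at heq; linarith
      exact mul_left_cancel₀ hs0 this
    have hsq : t1 ^ 2 * A2 ^ 2 = t2 ^ 2 * A1 ^ 2 := by
      have := congrArg (· ^ 2) hcr
      simpa [mul_pow] using this
    rw [hA1sq, hA2sq] at hsq
    have ht12 : t1 ^ 2 = t2 ^ 2 := by nlinarith
    have hAeq : A1 = A2 := by
      rw [show A1 = Real.sqrt (r2 - t1 ^ 2) from rfl, show A2 = Real.sqrt (r2 - t2 ^ 2) from rfl,
        show r2 - t1 ^ 2 = r2 - t2 ^ 2 from by linarith]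
    have : t1 * A2 = t2 * A2 := by rw [hcr, hAeq]
    exact mul_right_cancel₀ hA2.ne' this
  -- the set of t in I with rational ratio is countable
  have hcnt : Set.Countable {t ∈ I | ¬ Irrational (ρ t)} := by
    have hsub : {t ∈ I | ¬ Irrational (ρ t)} ⊆ ⋃ q : ℚ, {t ∈ I | ρ t = (q : ℝ)} := by
      rintro t ⟨htI, ht⟩
      rw [Irrational] at ht
      push_neg at ht
      obtain ⟨q, hq⟩ := ht
      exact Set.mem_iUnion.mpr ⟨q, htI, hq.symm⟩
    refine Set.Countable.mono hsub (Set.countable_iUnion fun q => ?_)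
    apply Set.Subsingleton.countable
    rintro t1 ⟨ht1, hq1⟩ t2 ⟨ht2, hq2⟩
    exact hinj t1 ht1 t2 ht2 (by rw [hq1, hq2])
  have hdense : Dense {t ∈ I | ¬ Irrational (ρ t)}ᶜ := hcnt.dense_compl ℝ
  obtain ⟨t, htI, htc⟩ := hdense.inter_open_nonempty I Metric.isOpen_ball
    ⟨u.1 i, Metric.mem_ball_self hδ'⟩
  have hirr : Irrational (ρ t) := by
    by_contra h
    exact htc ⟨htI, h⟩
  -- build the point
  have hmem : ∑ k, (V t k) ^ 2 = 1 := by
    have key : ∀ w : Fin n → ℝ, ∑ k, w k ^ 2 =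
        w i ^ 2 + (w j ^ 2 + ∑ k ∈ (Finset.univ.erase i).erase j, w k ^ 2) := by
      intro w
      rw [← Finset.add_sum_erase Finset.univ (fun k => w k ^ 2) (Finset.mem_univ i),
        ← Finset.add_sum_erase _ (fun k => w k ^ 2)
          (Finset.mem_erase.mpr ⟨hij.symm, Finset.mem_univ j⟩)]
    have hrest : ∑ k ∈ (Finset.univ.erase i).erase j, (V t k) ^ 2 =
        ∑ k ∈ (Finset.univ.erase i).erase j, (u.1 k) ^ 2 := by
      apply Finset.sum_congr rfl
      intro k hk
      rw [Finset.mem_erase, Finset.mem_erase] at hk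
      rw [hVk t k hk.2.1 hk.1]
    have h2 : (V t j) ^ 2 = r2 - t ^ 2 := by
      rw [hVj, mul_pow, hs2, one_mul, Real.sq_sqrt (by linarith [hIsub t htI])]
    have h3 := key (V t)
    rw [hVi, hrest, h2] at h3
    have h4 := key u.1
    rw [u.2] at h4
    rw [h3, hr2def]
    linarith [h4]
  refine ⟨⟨V t, hmem⟩, ?_, ?_⟩
  · rw [Metric.mem_ball, Subtype.dist_eq]
    have : dist t (u.1 i) < δ := lt_of_lt_of_le (by rwa [hIdef, Metric.mem_ball] at htI)
      (min_le_left _ _)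
    have := hδε this
    rwa [hVu] at this
  · refine ⟨i, j, ?_, ?_⟩
    · show V t j ≠ 0
      rw [hVj]
      exact mul_ne_zero hs0 (Real.sqrt_pos.mpr (by linarith [hIsub t htI])).ne'
    · show Irrational (V t i / V t j)
      rw [hVi, hVj]
      exact hirr

lemma good_const (n : ℕ)
    (f : {v : Fin n → ℝ // ∑ i, (v i) ^ 2 = 1} × ℝ → ℝ)
    (hf : Continuous f)
    (hper : ∀ (u : {v : Fin n → ℝ // ∑ i, (v i) ^ 2 = 1}) (p : ℝ) (m : Fin n → ℤ),
      f (u, p + ∑ i, u.1 i * (m i : ℝ)) = f (u, p))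
    (u : {v : Fin n → ℝ // ∑ i, (v i) ^ 2 = 1}) (i j : Fin n)
    (hj : u.1 j ≠ 0) (hirr : Irrational (u.1 i / u.1 j)) (p q : ℝ) :
    f (u, p) = f (u, q) := by
  set P : AddSubgroup ℝ :=
    { carrier := {t : ℝ | ∀ p : ℝ, f (u, p + t) = f (u, p)}
      zero_mem' := by intro p; simp
      add_mem' := by
        intro a b ha hb p
        rw [← add_assoc, hb (p + a), ha p]
      neg_mem' := by
        intro a ha p
        have h := ha (p + -a)
        rw [show p + -a + a = p by ring] at h
        exact h.symm } with hP
  have hclosed : IsClosed (P : Set ℝ) := by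
    have : (P : Set ℝ) = ⋂ r : ℝ, {t : ℝ | f (u, r + t) = f (u, r)} := by
      ext t
      simp only [Set.mem_iInter, Set.mem_setOf_eq]
      rfl
    rw [this]
    refine isClosed_iInter fun r => isClosed_eq ?_ continuous_const
    exact hf.comp (continuous_const.prodMk (continuous_const.add continuous_id))
  have hcoord : ∀ k : Fin n, u.1 k ∈ P := by
    intro k r
    have h := hper u r (fun l => if l = k then 1 else 0)
    have hs : ∑ l, u.1 l * (((if l = k then 1 else 0 : ℤ)) : ℝ) = u.1 k := by
      rw [Finset.sum_eq_single k]
      · simp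
      · intro b _ hb; simp [hb]
      · intro hb; exact absurd (Finset.mem_univ k) hb
    rwa [hs] at h
  rcases P.dense_or_cyclic with hdense | ⟨a, ha⟩
  · have huniv : (P : Set ℝ) = Set.univ := by
      rw [← hclosed.closure_eq, hdense.closure_eq]
    have hmem : (q - p) ∈ P := by
      have : (q - p) ∈ (P : Set ℝ) := by rw [huniv]; trivial
      exact this
    have := hmem p
    rw [show p + (q - p) = q by ring] at this
    exact this.symm
  · exfalso
    have hi' : u.1 i ∈ AddSubgroup.closure {a} := ha ▸ hcoord i
    have hj' : u.1 j ∈ AddSubgroup.closure {a} := ha ▸ hcoord j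
    rw [AddSubgroup.mem_closure_singleton] at hi' hj'
    obtain ⟨k, hk⟩ := hi'
    obtain ⟨l, hl⟩ := hj'
    rw [zsmul_eq_mul] at hk hl
    have hl0 : (l : ℝ) ≠ 0 := by
      intro h0
      rw [← hl, h0, zero_mul] at hj
      exact hj rfl
    have ha0 : a ≠ 0 := by
      intro h0
      rw [← hl, h0, mul_zero] at hj
      exact hj rfl
    apply hirr
    refine ⟨(k : ℚ) / (l : ℚ), ?_⟩
    rw [← hk, ← hl]
    push_cast
    rw [mul_div_mul_right _ _ ha0]

/-- A continuous function `f : S^{n-1} × ℝ → ℝ` (n ≥ 2) satisfying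
`f (u, p + u·m) = f (u, p)` for all integer vectors `m` satisfies
`f (u, p + u·x) = f (u, p)` for all `x ∈ ℝⁿ`; in particular `f (u, p) = f (u, 0)`. -/
theorem stmt2 (n : ℕ) (hn : 2 ≤ n)
    (f : {v : Fin n → ℝ // ∑ i, (v i) ^ 2 = 1} × ℝ → ℝ)
    (hf : Continuous f)
    (hper : ∀ (u : {v : Fin n → ℝ // ∑ i, (v i) ^ 2 = 1}) (p : ℝ) (m : Fin n → ℤ),
      f (u, p + ∑ i, u.1 i * (m i : ℝ)) = f (u, p)) :
    (∀ (u : {v : Fin n → ℝ // ∑ i, (v i) ^ 2 = 1}) (p : ℝ) (x : Fin n → ℝ),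
      f (u, p + ∑ i, u.1 i * x i) = f (u, p)) ∧
    (∀ (u : {v : Fin n → ℝ // ∑ i, (v i) ^ 2 = 1}) (p : ℝ), f (u, p) = f (u, 0)) := by
  have hconst : ∀ (p q : ℝ) (u : {v : Fin n → ℝ // ∑ i, (v i) ^ 2 = 1}),
      f (u, p) = f (u, q) := by
    intro p q
    have hcl : IsClosed {u : {v : Fin n → ℝ // ∑ i, (v i) ^ 2 = 1} |
        f (u, p) = f (u, q)} := by
      refine isClosed_eq ?_ ?_
      · exact hf.comp (continuous_id.prodMk continuous_const)
      · exact hf.comp (continuous_id.prodMk continuous_const)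
    have hsub : {u : {v : Fin n → ℝ // ∑ i, (v i) ^ 2 = 1} |
        ∃ i j : Fin n, u.1 j ≠ 0 ∧ Irrational (u.1 i / u.1 j)} ⊆
        {u | f (u, p) = f (u, q)} := by
      rintro u ⟨i, j, hj, hirr⟩
      exact good_const n f hf hper u i j hj hirr p q
    have hd := (good_dense n hn).mono hsub
    have : {u : {v : Fin n → ℝ // ∑ i, (v i) ^ 2 = 1} | f (u, p) = f (u, q)}
        = Set.univ := by
      rw [← hcl.closure_eq, hd.closure_eq]
    intro u
    exact (Set.eq_univ_iff_forall.mp this) u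
  constructor
  · intro u p x
    exact hconst _ _ u
  · intro u p
    exact hconst _ _ u
end

section
/- Let d be the metric on ℝ² given by d((x₁,x₂),(y₁,y₂)) = √((x₁−y₁)² + (x₂−y₂)²) + |7x₂ + sin(2πx₂) − 7y₂ − sin(2πy₂)|. Then d is a metric (symmetric, nonnegative, vanishing exactly on the diagonal, satisfying the triangle inequality), it is invariant under integer translations d(x + m, y + m) = d(x, y) for m ∈ ℤ², and every straight line segment is a geodesic: if y lies on the segment from x to z then d(x,y) + d(y,z) = d(x,z). -/
open Real


lemma sin_lip (a b : ℝ) : |Real.sin a - Real.sin b| ≤ |a - b| := by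
  rw [Real.sin_sub_sin]
  calc |2 * Real.sin ((a-b)/2) * Real.cos ((a+b)/2)|
      = 2 * |Real.sin ((a-b)/2)| * |Real.cos ((a+b)/2)| := by
        rw [abs_mul, abs_mul]; norm_num
    _ ≤ 2 * |(a-b)/2| * 1 := by
        apply mul_le_mul (by nlinarith [(Real.abs_sin_le_abs : |Real.sin ((a-b)/2)| ≤ |(a-b)/2|), abs_nonneg ((a-b)/2)])
          (Real.abs_cos_le_one _) (abs_nonneg _)
        positivity
    _ = |a - b| := by rw [abs_div, abs_two]; ring

noncomputable def gB (t : ℝ) : ℝ := 7 * t + Real.sin (2 * π * t)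

lemma gB_mono : Monotone gB := by
  intro a b hab
  have key := sin_lip (2*π*a) (2*π*b)
  have h2 : |2*π*a - 2*π*b| = 2*π*(b-a) := by
    rw [abs_sub_comm, abs_of_nonneg (by nlinarith [Real.pi_pos])]; ring
  have h3 : Real.sin (2*π*a) - Real.sin (2*π*b) ≤ 2*π*(b-a) := by
    calc _ ≤ |Real.sin (2*π*a) - Real.sin (2*π*b)| := le_abs_self _
    _ ≤ _ := h2 ▸ key
  have hpi : π < 3.15 := Real.pi_lt_d2
  simp only [gB]
  nlinarith [Real.pi_pos]

lemma sqrt_eq_cabs (a b : ℝ) : Real.sqrt (a^2 + b^2) = ‖(⟨a, b⟩ : ℂ)‖ := by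
  rw [Complex.norm_def, Complex.normSq_mk]; ring_nf

lemma sqrt_tri (a b c e : ℝ) :
    Real.sqrt ((a+c)^2 + (b+e)^2) ≤ Real.sqrt (a^2+b^2) + Real.sqrt (c^2+e^2) := by
  rw [sqrt_eq_cabs, sqrt_eq_cabs, sqrt_eq_cabs]
  have h : (⟨a+c, b+e⟩ : ℂ) = ⟨a,b⟩ + ⟨c,e⟩ := by apply Complex.ext <;> simp
  rw [h]; exact norm_add_le _ _

lemma between_abs {g : ℝ → ℝ} (hg : Monotone g) (a c t : ℝ) (ht0 : 0 ≤ t) (ht1 : t ≤ 1) :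
    |g a - g ((1-t)*a + t*c)| + |g ((1-t)*a + t*c) - g c| = |g a - g c| := by
  set b := (1-t)*a + t*c with hb
  rcases le_total a c with h | h
  · have hab : a ≤ b := by nlinarith
    have hbc : b ≤ c := by nlinarith
    have h1 := hg hab; have h2 := hg hbc; have h3 := hg h
    rw [abs_of_nonpos (by linarith), abs_of_nonpos (by linarith),
      abs_of_nonpos (by linarith)]; ring
  · have hab : b ≤ a := by nlinarith
    have hbc : c ≤ b := by nlinarith
    have h1 := hg hab; have h2 := hg hbc; have h3 := hg h
    rw [abs_of_nonneg (by linarith), abs_of_nonneg (by linarith),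
      abs_of_nonneg (by linarith)]; ring

/-- Busemann's example. The function
`d(x,y) = √((x₁−y₁)² + (x₂−y₂)²) + |7x₂ + sin(2πx₂) − 7y₂ − sin(2πy₂)|` on ℝ² is a metric,
is invariant under integer translations, and every straight segment is a geodesic. -/
theorem stmt9 (d : (ℝ × ℝ) → (ℝ × ℝ) → ℝ)
    (hd : ∀ x y : ℝ × ℝ, d x y =
      Real.sqrt ((x.1 - y.1) ^ 2 + (x.2 - y.2) ^ 2) +
        |7 * x.2 + Real.sin (2 * π * x.2) - 7 * y.2 - Real.sin (2 * π * y.2)|) :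
    (∀ x y, d x y = d y x) ∧
    (∀ x y, 0 ≤ d x y) ∧
    (∀ x y, d x y = 0 ↔ x = y) ∧
    (∀ x y z, d x z ≤ d x y + d y z) ∧
    (∀ (x y : ℝ × ℝ) (m : ℤ × ℤ),
      d (x.1 + (m.1 : ℝ), x.2 + (m.2 : ℝ)) (y.1 + (m.1 : ℝ), y.2 + (m.2 : ℝ)) = d x y) ∧
    (∀ (x z : ℝ × ℝ) (t : ℝ), t ∈ Set.Icc (0 : ℝ) 1 →
      d x ((1 - t) • x + t • z) + d ((1 - t) • x + t • z) z = d x z) := by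
  refine ⟨?_, ?_, ?_, ?_, ?_, ?_⟩
  · intro x y
    rw [hd, hd, abs_sub_comm]
    ring_nf
  · intro x y
    rw [hd]
    positivity
  · intro x y
    rw [hd]
    constructor
    · intro h
      have h1 : Real.sqrt ((x.1 - y.1) ^ 2 + (x.2 - y.2) ^ 2) = 0 := by
        have := abs_nonneg (7 * x.2 + Real.sin (2 * π * x.2) - 7 * y.2 - Real.sin (2 * π * y.2))
        have := Real.sqrt_nonneg ((x.1 - y.1) ^ 2 + (x.2 - y.2) ^ 2)
        linarith
      have h2 : (x.1 - y.1) ^ 2 + (x.2 - y.2) ^ 2 = 0 := by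
        have := Real.sqrt_eq_zero (by positivity : (0:ℝ) ≤ (x.1 - y.1) ^ 2 + (x.2 - y.2) ^ 2)
        exact this.mp h1
      have e1 : x.1 = y.1 := by nlinarith [sq_nonneg (x.1 - y.1), sq_nonneg (x.2 - y.2)]
      have e2 : x.2 = y.2 := by nlinarith [sq_nonneg (x.1 - y.1), sq_nonneg (x.2 - y.2)]
      exact Prod.ext e1 e2
    · rintro rfl
      simp
  · intro x y z
    rw [hd, hd, hd]
    have t1 : Real.sqrt ((x.1 - z.1) ^ 2 + (x.2 - z.2) ^ 2) ≤
        Real.sqrt ((x.1 - y.1) ^ 2 + (x.2 - y.2) ^ 2) +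
        Real.sqrt ((y.1 - z.1) ^ 2 + (y.2 - z.2) ^ 2) := by
      have := sqrt_tri (x.1 - y.1) (x.2 - y.2) (y.1 - z.1) (y.2 - z.2)
      have e : (x.1 - y.1 + (y.1 - z.1)) = x.1 - z.1 := by ring
      have e2 : (x.2 - y.2 + (y.2 - z.2)) = x.2 - z.2 := by ring
      rwa [e, e2] at this
    have t2 := abs_sub_le (7 * x.2 + Real.sin (2 * π * x.2)) (7 * y.2 + Real.sin (2 * π * y.2))
      (7 * z.2 + Real.sin (2 * π * z.2))
    have e3 : ∀ u v : ℝ × ℝ, 7 * u.2 + Real.sin (2*π*u.2) - 7 * v.2 - Real.sin (2*π*v.2)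
        = (7 * u.2 + Real.sin (2*π*u.2)) - (7 * v.2 + Real.sin (2*π*v.2)) := by intros; ring
    rw [e3 x z, e3 x y, e3 y z]
    linarith
  · intro x y m
    rw [hd, hd]
    have s1 : ∀ (u : ℝ) (n : ℤ), Real.sin (2 * π * (u + (n:ℝ))) = Real.sin (2 * π * u) := by
      intro u n
      have : 2 * π * (u + (n:ℝ)) = 2 * π * u + (n:ℝ) * (2 * π) := by ring
      rw [this, Real.sin_add_int_mul_two_pi]
    simp only [s1]
    ring_nf
  · intro x z t ht
    obtain ⟨ht0, ht1⟩ := ht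
    rw [hd, hd, hd]
    have hy1 : ((1 - t) • x + t • z).1 = (1-t) * x.1 + t * z.1 := by simp
    have hy2 : ((1 - t) • x + t • z).2 = (1-t) * x.2 + t * z.2 := by simp
    rw [hy1, hy2]
    have euc : Real.sqrt ((x.1 - ((1-t)*x.1 + t*z.1)) ^ 2 + (x.2 - ((1-t)*x.2 + t*z.2)) ^ 2) +
        Real.sqrt ((((1-t)*x.1 + t*z.1) - z.1) ^ 2 + (((1-t)*x.2 + t*z.2) - z.2) ^ 2) =
        Real.sqrt ((x.1 - z.1) ^ 2 + (x.2 - z.2) ^ 2) := by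
      have e1 : (x.1 - ((1-t)*x.1 + t*z.1)) ^ 2 + (x.2 - ((1-t)*x.2 + t*z.2)) ^ 2
          = t^2 * ((x.1 - z.1)^2 + (x.2 - z.2)^2) := by ring
      have e2 : (((1-t)*x.1 + t*z.1) - z.1) ^ 2 + (((1-t)*x.2 + t*z.2) - z.2) ^ 2
          = (1-t)^2 * ((x.1 - z.1)^2 + (x.2 - z.2)^2) := by ring
      rw [e1, e2, Real.sqrt_mul (sq_nonneg t), Real.sqrt_mul (sq_nonneg (1-t)),
        Real.sqrt_sq ht0, Real.sqrt_sq (by linarith : (0:ℝ) ≤ 1 - t)]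
      ring
    have habs := between_abs gB_mono x.2 z.2 t ht0 ht1
    simp only [gB] at habs
    have e4 : ∀ u v : ℝ, 7 * u + Real.sin (2*π*u) - 7 * v - Real.sin (2*π*v)
        = (7 * u + Real.sin (2*π*u)) - (7 * v + Real.sin (2*π*v)) := by intros; ring
    rw [e4, e4, e4]
    linarith
end
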